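/- arXiv:2305.07992 — 8 statements merged into one kernel-verified Lean document; each statement's English description precedes it below -/
import Mathlib

section
/- Let ℓ ≥ 1 and k ≥ 1 be integers. If λ₁ > 1 is a real root of x^ℓ - x^(ℓ-1) - 1 and λ₂ > 1 is a real root of x^(ℓ+k) - x^(ℓ+k-1) - 1, then λ₁ > λ₂. -/
/-- If λ₁ > 1 is a real root of x^ℓ - x^(ℓ-1) - 1 and λ₂ > 1 is a real root of
x^(ℓ+k) - x^(ℓ+k-1) - 1 (ℓ, k ≥ 1), then λ₁ > λ₂. -/
theorem root_lt_of_longer (ℓ k : ℕ) (hℓ : 1 ≤ ℓ) (hk : 1 ≤ k)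
    (lam₁ lam₂ : ℝ) (h₁ : 1 < lam₁) (h₂ : 1 < lam₂)
    (hr₁ : lam₁ ^ ℓ - lam₁ ^ (ℓ - 1) - 1 = 0)
    (hr₂ : lam₂ ^ (ℓ + k) - lam₂ ^ (ℓ + k - 1) - 1 = 0) :
    lam₁ > lam₂ := by
  obtain ⟨m, rfl⟩ : ∃ m, ℓ = m + 1 := ⟨ℓ - 1, (Nat.succ_pred_eq_of_pos hℓ).symm⟩
  have hm1 : m + 1 - 1 = m := by omega
  have hm2 : m + 1 + k - 1 = m + k := by omega
  rw [hm1] at hr₁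
  rw [hm2] at hr₂
  have e1 : lam₁ ^ m * (lam₁ - 1) = 1 := by linear_combination hr₁
  have e2 : lam₂ ^ k * (lam₂ ^ m * (lam₂ - 1)) = 1 := by
    have : lam₂ ^ (m + 1 + k) = lam₂ ^ k * (lam₂ ^ m * lam₂) := by ring
    linear_combination hr₂
  have hk2 : (1:ℝ) < lam₂ ^ k := one_lt_pow₀ h₂ (by omega)
  have e2' : lam₂ ^ m * (lam₂ - 1) < 1 := by
    nlinarith [pow_pos (lt_trans one_pos h₂) m]
  by_contra h
  push_neg at h
  have hp : lam₁ ^ m ≤ lam₂ ^ m := pow_le_pow_left₀ (by linarith) h m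
  nlinarith [pow_pos (lt_trans one_pos h₁) m]
end

section
/- Let ℓ ≥ 2 and let 1 ≤ p < p+k < ℓ be integers. If λ₁ > 1 is a real root of x^(ℓ+1) - x^ℓ - x^(ℓ-p+1) + x^(ℓ-p) - 1 and λ₂ > 1 is a real root of x^(ℓ+1) - x^ℓ - x^(ℓ-p-k+1) + x^(ℓ-p-k) - 1, then λ₁ > λ₂. -/
lemma aux_mono (a b : ℕ) (x y : ℝ) (hx : 1 < x) (hxy : x ≤ y) :
    (x - 1) * (x ^ a * (x ^ b - 1)) ≤ (y - 1) * (y ^ a * (y ^ b - 1)) := by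
  have hy : 1 < y := lt_of_lt_of_le hx hxy
  have h1 : x - 1 ≤ y - 1 := by linarith
  have h2 : x ^ a ≤ y ^ a := pow_le_pow_left₀ (by linarith) hxy a
  have h3 : x ^ b - 1 ≤ y ^ b - 1 := by
    have := pow_le_pow_left₀ (by linarith : (0:ℝ) ≤ x) hxy b; linarith
  have hx1 : (0:ℝ) ≤ x - 1 := by linarith
  have hxa : (0:ℝ) ≤ x ^ a := by positivity
  have hxb : (0:ℝ) ≤ x ^ b - 1 := by
    have := one_le_pow₀ (le_of_lt hx) (n:=b); linarith
  have hya : (0:ℝ) ≤ y ^ a := by positivity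
  have hy1 : (0:ℝ) ≤ y - 1 := by linarith
  exact mul_le_mul h1 (mul_le_mul h2 h3 hxb hya) (mul_nonneg hxa hxb) hy1

/-- For ℓ ≥ 2 and 1 ≤ p < p+k < ℓ, roots > 1 of the characteristic polynomials of
periodic labels with periods p and p+k satisfy λ₁ > λ₂. -/
theorem root_gt_of_smaller_period (ℓ p k : ℕ) (hℓ : 2 ≤ ℓ) (hp : 1 ≤ p) (hk : 1 ≤ k)
    (hpk : p + k < ℓ)
    (lam₁ lam₂ : ℝ) (h₁ : 1 < lam₁) (h₂ : 1 < lam₂)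
    (hr₁ : lam₁ ^ (ℓ + 1) - lam₁ ^ ℓ - lam₁ ^ (ℓ - p + 1) + lam₁ ^ (ℓ - p) - 1 = 0)
    (hr₂ : lam₂ ^ (ℓ + 1) - lam₂ ^ ℓ - lam₂ ^ (ℓ - p - k + 1) + lam₂ ^ (ℓ - p - k) - 1 = 0) :
    lam₁ > lam₂ := by
  by_contra h
  push_neg at h
  -- rewrite the root conditions in factored form
  have e1 : ℓ = (ℓ - p) + p := by omega
  have e2 : ℓ = (ℓ - p - k) + (p + k) := by omega
  have key₁ : (lam₁ - 1) * (lam₁ ^ (ℓ - p) * (lam₁ ^ p - 1)) = 1 := by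
    have hA : lam₁ ^ (ℓ + 1) = lam₁ * lam₁ ^ ℓ := by ring
    have hB : lam₁ ^ (ℓ - p + 1) = lam₁ * lam₁ ^ (ℓ - p) := by ring
    have hC : lam₁ ^ ℓ = lam₁ ^ (ℓ - p) * lam₁ ^ p := by
      rw [← pow_add, ← e1]
    nlinarith [hr₁]
  have key₂ : (lam₂ - 1) * (lam₂ ^ (ℓ - p - k) * (lam₂ ^ (p + k) - 1)) = 1 := by
    have hA : lam₂ ^ (ℓ + 1) = lam₂ * lam₂ ^ ℓ := by ring
    have hB : lam₂ ^ (ℓ - p - k + 1) = lam₂ * lam₂ ^ (ℓ - p - k) := by ring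
    have hC : lam₂ ^ ℓ = lam₂ ^ (ℓ - p - k) * lam₂ ^ (p + k) := by
      rw [← pow_add, ← e2]
    nlinarith [hr₂]
  -- expressed as lam^ℓ - lam^(ℓ-m)
  have f1 : lam₂ ^ (ℓ - p) * (lam₂ ^ p - 1) = lam₂ ^ ℓ - lam₂ ^ (ℓ - p) := by
    rw [mul_sub, ← pow_add, ← e1, mul_one]
  have f2 : lam₂ ^ (ℓ - p - k) * (lam₂ ^ (p + k) - 1) = lam₂ ^ ℓ - lam₂ ^ (ℓ - p - k) := by
    rw [mul_sub, ← pow_add, ← e2, mul_one]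
  have step1 : (1:ℝ) ≤ (lam₂ - 1) * (lam₂ ^ (ℓ - p) * (lam₂ ^ p - 1)) := by
    calc (1:ℝ) = (lam₁ - 1) * (lam₁ ^ (ℓ - p) * (lam₁ ^ p - 1)) := key₁.symm
    _ ≤ _ := aux_mono _ _ _ _ h₁ h
  have step2 : (lam₂ - 1) * (lam₂ ^ (ℓ - p) * (lam₂ ^ p - 1))
      < (lam₂ - 1) * (lam₂ ^ (ℓ - p - k) * (lam₂ ^ (p + k) - 1)) := by
    rw [f1, f2]
    have hlt : lam₂ ^ (ℓ - p - k) < lam₂ ^ (ℓ - p) :=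
      pow_lt_pow_right₀ h₂ (by omega)
    have : (0:ℝ) < lam₂ - 1 := by linarith
    nlinarith
  linarith [key₂]
end

section
/- Let ℓ ≥ 2, 1 ≤ p < ℓ, and k ≥ 1 be integers. If λ₁ > 1 is a real root of x^(ℓ+1) - x^ℓ - x^(ℓ-p+1) + x^(ℓ-p) - 1 and λ₂ > 1 is a real root of x^(ℓ+k+1) - x^(ℓ+k) - x^(ℓ+k-p+1) + x^(ℓ+k-p) - 1, then λ₁ > λ₂. -/
/-- For ℓ ≥ 2, 1 ≤ p < ℓ, k ≥ 1: roots > 1 of the characteristic polynomials of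
periodic labels of lengths ℓ and ℓ+k with the same period p satisfy λ₁ > λ₂. -/
theorem root_gt_of_shorter_periodic (ℓ p k : ℕ) (hℓ : 2 ≤ ℓ) (hp : 1 ≤ p) (hpl : p < ℓ)
    (hk : 1 ≤ k)
    (lam₁ lam₂ : ℝ) (h₁ : 1 < lam₁) (h₂ : 1 < lam₂)
    (hr₁ : lam₁ ^ (ℓ + 1) - lam₁ ^ ℓ - lam₁ ^ (ℓ - p + 1) + lam₁ ^ (ℓ - p) - 1 = 0)
    (hr₂ : lam₂ ^ (ℓ + k + 1) - lam₂ ^ (ℓ + k) - lam₂ ^ (ℓ + k - p + 1) + lam₂ ^ (ℓ + k - p) - 1 = 0) :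
    lam₁ > lam₂ := by
  set m := ℓ - p with hmdef
  have hm : ℓ = m + p := (Nat.sub_add_cancel hpl.le).symm
  have hkp : ℓ + k - p = m + k := by omega
  -- g x = x^m * (x^p - 1) * (x - 1)
  have hg1 : lam₁ ^ m * (lam₁ ^ p - 1) * (lam₁ - 1) = 1 := by
    have e : lam₁ ^ m * (lam₁ ^ p - 1) * (lam₁ - 1)
        = lam₁ ^ (ℓ + 1) - lam₁ ^ ℓ - lam₁ ^ (m + 1) + lam₁ ^ m := by
      rw [hm]; ring
    rw [hmdef] at e ⊢
    linarith [hr₁, e]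
  have hg2 : lam₂ ^ k * (lam₂ ^ m * (lam₂ ^ p - 1) * (lam₂ - 1)) = 1 := by
    have e : lam₂ ^ k * (lam₂ ^ m * (lam₂ ^ p - 1) * (lam₂ - 1))
        = lam₂ ^ (ℓ + k + 1) - lam₂ ^ (ℓ + k) - lam₂ ^ (m + k + 1) + lam₂ ^ (m + k) := by
      rw [hm]; ring
    rw [hkp] at hr₂
    linarith [hr₂, e]
  have hk2 : (1:ℝ) < lam₂ ^ k := one_lt_pow₀ h₂ (by omega)
  have hglt : lam₂ ^ m * (lam₂ ^ p - 1) * (lam₂ - 1) < 1 := by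
    nlinarith [hg2, hk2]
  by_contra h
  push_neg at h
  -- h : lam₁ ≤ lam₂, so g lam₁ ≤ g lam₂
  have h1m : lam₁ ^ m ≤ lam₂ ^ m := pow_le_pow_left₀ (by linarith) h m
  have h1p : lam₁ ^ p - 1 ≤ lam₂ ^ p - 1 := by
    have := pow_le_pow_left₀ (le_of_lt (by linarith : (0:ℝ) < lam₁)) h p
    linarith
  have hp1pos : (0:ℝ) < lam₁ ^ p - 1 := by
    have := one_lt_pow₀ h₁ (by omega : p ≠ 0); linarith
  have hm1pos : (0:ℝ) < lam₁ ^ m := pow_pos (by linarith) m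
  have hmono : lam₁ ^ m * (lam₁ ^ p - 1) * (lam₁ - 1)
      ≤ lam₂ ^ m * (lam₂ ^ p - 1) * (lam₂ - 1) := by
    have h12 : lam₁ ^ m * (lam₁ ^ p - 1) ≤ lam₂ ^ m * (lam₂ ^ p - 1) :=
      mul_le_mul h1m h1p hp1pos.le (by positivity)
    exact mul_le_mul h12 (by linarith) (by linarith) (by nlinarith)
  linarith [hg1, hglt, hmono]
end

section
/- Let ℓ ≥ 2 and 1 ≤ r < r+k < ℓ be integers. If λ₁ > 1 is a real root of x^ℓ - x^(ℓ-1) - x^r + x^(r-1) - 1 and λ₂ > 1 is a real root of x^ℓ - x^(ℓ-1) - x^(r+k) + x^(r+k-1) - 1, then λ₂ > λ₁. -/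
/-- For ℓ ≥ 2 and 1 ≤ r < r+k < ℓ: roots > 1 of the characteristic polynomials for
cyclic overlaps r and r+k satisfy λ₂ > λ₁. -/
theorem root_lt_of_larger_overlap (ℓ r k : ℕ) (hℓ : 2 ≤ ℓ) (hr : 1 ≤ r) (hk : 1 ≤ k)
    (hrk : r + k < ℓ)
    (lam₁ lam₂ : ℝ) (h₁ : 1 < lam₁) (h₂ : 1 < lam₂)
    (hr₁ : lam₁ ^ ℓ - lam₁ ^ (ℓ - 1) - lam₁ ^ r + lam₁ ^ (r - 1) - 1 = 0)
    (hr₂ : lam₂ ^ ℓ - lam₂ ^ (ℓ - 1) - lam₂ ^ (r + k) + lam₂ ^ (r + k - 1) - 1 = 0) :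
    lam₂ > lam₁ := by
  by_contra hle
  push_neg at hle
  -- pow_succ rewrites
  have p1 : lam₁ ^ ℓ = lam₁ ^ (ℓ - 1) * lam₁ := by
    rw [← pow_succ]; congr 1; omega
  have p2 : lam₁ ^ r = lam₁ ^ (r - 1) * lam₁ := by
    rw [← pow_succ]; congr 1; omega
  have p3 : lam₂ ^ ℓ = lam₂ ^ (ℓ - 1) * lam₂ := by
    rw [← pow_succ]; congr 1; omega
  have p4 : lam₂ ^ (r + k) = lam₂ ^ (r + k - 1) * lam₂ := by
    rw [← pow_succ]; congr 1; omega
  have e₁ : (lam₁ - 1) * (lam₁ ^ (ℓ - 1) - lam₁ ^ (r - 1)) = 1 := by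
    linear_combination hr₁ - p1 + p2
  have e₂ : (lam₂ - 1) * (lam₂ ^ (ℓ - 1) - lam₂ ^ (r + k - 1)) = 1 := by
    linear_combination hr₂ - p3 + p4
  have hd : (r - 1) + (ℓ - r) = ℓ - 1 := by omega
  have f₁ : lam₁ ^ (ℓ - 1) = lam₁ ^ (r - 1) * lam₁ ^ (ℓ - r) := by
    rw [← pow_add, hd]
  have f₂ : lam₂ ^ (ℓ - 1) = lam₂ ^ (r - 1) * lam₂ ^ (ℓ - r) := by
    rw [← pow_add, hd]
  have h0₂ : (0:ℝ) ≤ lam₂ := by linarith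
  have hB : lam₂ ^ (r - 1) ≤ lam₁ ^ (r - 1) := pow_le_pow_left₀ h0₂ hle _
  have hC : lam₂ ^ (ℓ - r) ≤ lam₁ ^ (ℓ - r) := pow_le_pow_left₀ h0₂ hle _
  have hC1 : (1:ℝ) ≤ lam₂ ^ (ℓ - r) := one_le_pow₀ (le_of_lt h₂)
  have hBpos : (0:ℝ) < lam₂ ^ (r - 1) := pow_pos (by linarith) _
  have hB1pos : (0:ℝ) < lam₁ ^ (r - 1) := pow_pos (by linarith) _
  -- second factor monotone
  have h5 : lam₂ ^ (r - 1) * (lam₂ ^ (ℓ - r) - 1) ≤ lam₁ ^ (r - 1) * (lam₁ ^ (ℓ - r) - 1) :=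
    mul_le_mul hB (by linarith) (by linarith) (le_of_lt hB1pos)
  have h6 : (lam₂ - 1) * (lam₂ ^ (r - 1) * (lam₂ ^ (ℓ - r) - 1)) ≤
      (lam₁ - 1) * (lam₁ ^ (r - 1) * (lam₁ ^ (ℓ - r) - 1)) := by
    apply mul_le_mul (by linarith) h5 (by nlinarith) (by linarith)
  -- F₂ ≤ F₁ = 1
  have hF : (lam₂ - 1) * (lam₂ ^ (ℓ - 1) - lam₂ ^ (r - 1)) ≤ 1 := by
    calc (lam₂ - 1) * (lam₂ ^ (ℓ - 1) - lam₂ ^ (r - 1))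
        = (lam₂ - 1) * (lam₂ ^ (r - 1) * (lam₂ ^ (ℓ - r) - 1)) := by rw [f₂]; ring
      _ ≤ (lam₁ - 1) * (lam₁ ^ (r - 1) * (lam₁ ^ (ℓ - r) - 1)) := h6
      _ = (lam₁ - 1) * (lam₁ ^ (ℓ - 1) - lam₁ ^ (r - 1)) := by rw [f₁]; ring
      _ = 1 := e₁
  -- but F₂ > 1 since lam₂^(r-1) < lam₂^(r+k-1)
  have hq : lam₂ ^ (r - 1) < lam₂ ^ (r + k - 1) := by
    apply pow_lt_pow_right₀ h₂ (by omega)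
  have hpos : (0:ℝ) < lam₂ - 1 := by linarith
  nlinarith [mul_pos hpos (sub_pos.2 hq)]
end

section
/- Let ℓ ≥ 2 and 1 ≤ p < ℓ. If λ₁ > 1 is a real root of q(x) = x^ℓ - x^(ℓ-1) - 1 and λ₂ > 1 is a real root of p(x) = x^(ℓ+1) - x^ℓ - x^(ℓ-p+1) + x^(ℓ-p) - 1, then λ₂ > λ₁. -/
/-- For ℓ ≥ 2 and 1 ≤ p < ℓ: a root λ₂ > 1 of x^(ℓ+1) - x^ℓ - x^(ℓ-p+1) + x^(ℓ-p) - 1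
exceeds a root λ₁ > 1 of x^ℓ - x^(ℓ-1) - 1. -/
theorem periodic_root_gt_noncyclic_root (ℓ p : ℕ) (hℓ : 2 ≤ ℓ) (hp : 1 ≤ p) (hpl : p < ℓ)
    (lam₁ lam₂ : ℝ) (h₁ : 1 < lam₁) (h₂ : 1 < lam₂)
    (hr₁ : lam₁ ^ ℓ - lam₁ ^ (ℓ - 1) - 1 = 0)
    (hr₂ : lam₂ ^ (ℓ + 1) - lam₂ ^ ℓ - lam₂ ^ (ℓ - p + 1) + lam₂ ^ (ℓ - p) - 1 = 0) :
    lam₂ > lam₁ := by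
  by_contra h
  push_neg at h
  have hℓ1 : ℓ - 1 + 1 = ℓ := by omega
  have e1 : lam₂ ^ (ℓ + 1) = lam₂ ^ ℓ * lam₂ := pow_succ _ _
  have e2 : lam₂ ^ ℓ = lam₂ ^ (ℓ - 1) * lam₂ := by
    rw [← pow_succ, hℓ1]
  have e3 : lam₂ ^ (ℓ - p + 1) = lam₂ ^ (ℓ - p) * lam₂ := pow_succ _ _
  rw [e1, e3, e2] at hr₂
  have key : lam₂ * (lam₂ ^ (ℓ - 1) * lam₂ - lam₂ ^ (ℓ - 1) - 1)
      = (lam₂ - 1) * (lam₂ ^ (ℓ - p) - 1) := by linear_combination hr₂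
  have hb : (1 : ℝ) < lam₂ ^ (ℓ - p) := one_lt_pow₀ h₂ (by omega)
  have hqpos : 0 < lam₂ ^ (ℓ - 1) * lam₂ - lam₂ ^ (ℓ - 1) - 1 := by
    nlinarith [mul_pos (sub_pos.mpr h₂) (sub_pos.mpr hb)]
  -- monotonicity contradiction
  have e2' : lam₁ ^ ℓ = lam₁ ^ (ℓ - 1) * lam₁ := by
    rw [← pow_succ, hℓ1]
  rw [e2'] at hr₁
  have hpow : lam₂ ^ (ℓ - 1) ≤ lam₁ ^ (ℓ - 1) :=
    pow_le_pow_left₀ (by linarith) h _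
  nlinarith [pow_pos (lt_trans zero_lt_one h₂) (ℓ - 1)]
end

section
/- Call a finite directed graph (loops allowed) path unique if for every k ≥ 1 and every ordered pair of vertices (u,v) there is at most one directed walk of length k from u to v. Then a path unique graph on n vertices has at most (n+1)²/4 edges if n is odd and at most n(n+2)/4 edges if n is even. -/
/-- `f : Fin (k+1) → V` is a directed walk of length `k` in the directed graph
with edge set `E` (loops allowed). -/
def IsWalk {V : Type*} (E : Finset (V × V)) (k : ℕ) (f : Fin (k + 1) → V) : Prop :=
  ∀ i : Fin k, (f i.castSucc, f i.succ) ∈ E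

/-- A directed graph is path unique if for every k ≥ 1 and every ordered pair of
vertices there is at most one directed walk of length k between them. -/
def PathUnique {V : Type*} (E : Finset (V × V)) : Prop :=
  ∀ k : ℕ, 1 ≤ k → ∀ f g : Fin (k + 1) → V, IsWalk E k f → IsWalk E k g →
    f 0 = g 0 → f (Fin.last k) = g (Fin.last k) → f = g

open scoped Classical

set_option linter.unusedSectionVars false

namespace PathUniqueAux

variable {V : Type*} [Fintype V]

/-- The finset of walks of length `k` starting at `v`. -/
noncomputable def W (F : Finset (V × V)) (k : ℕ) (v : V) : Finset (Fin (k + 1) → V) :=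
  Finset.univ.filter (fun f => IsWalk F k f ∧ f 0 = v)

lemma mem_W {F : Finset (V × V)} {k : ℕ} {v : V} {f : Fin (k + 1) → V} :
    f ∈ W F k v ↔ IsWalk F k f ∧ f 0 = v := by simp [W]

/-- Out-neighbourhood. -/
noncomputable def OutS (F : Finset (V × V)) (v : V) : Finset V :=
  (F.filter (fun e => e.1 = v)).image Prod.snd

/-- In-neighbourhood. -/
noncomputable def InS (F : Finset (V × V)) (v : V) : Finset V :=
  (F.filter (fun e => e.2 = v)).image Prod.fst

lemma mem_OutS {F : Finset (V × V)} {v b : V} : b ∈ OutS F v ↔ (v, b) ∈ F := by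
  constructor
  · intro h
    rcases Finset.mem_image.mp h with ⟨e, he, rfl⟩
    rcases Finset.mem_filter.mp he with ⟨heF, h1⟩
    have : e = (v, e.2) := by
      ext <;> simp [h1]
    rwa [← this]
  · intro h
    exact Finset.mem_image.mpr ⟨(v, b), Finset.mem_filter.mpr ⟨h, rfl⟩, rfl⟩

lemma mem_InS {F : Finset (V × V)} {v b : V} : b ∈ InS F v ↔ (b, v) ∈ F := by
  constructor
  · intro h
    rcases Finset.mem_image.mp h with ⟨e, he, rfl⟩
    rcases Finset.mem_filter.mp he with ⟨heF, h1⟩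
    have : e = (e.1, v) := by
      ext <;> simp [h1]
    rwa [← this]
  · intro h
    exact Finset.mem_image.mpr ⟨(b, v), Finset.mem_filter.mpr ⟨h, rfl⟩, rfl⟩

lemma card_OutS {F : Finset (V × V)} {v : V} :
    (F.filter (fun e => e.1 = v)).card = (OutS F v).card := by
  refine (Finset.card_image_of_injOn ?_).symm
  intro e he e' he' h
  have h1 : e.1 = v := (Finset.mem_filter.mp he).2
  have h2 : e'.1 = v := (Finset.mem_filter.mp he').2
  ext
  · rw [h1, h2]
  · exact h

lemma card_InS {F : Finset (V × V)} {v : V} :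
    (F.filter (fun e => e.2 = v)).card = (InS F v).card := by
  refine (Finset.card_image_of_injOn ?_).symm
  intro e he e' he' h
  have h1 : e.2 = v := (Finset.mem_filter.mp he).2
  have h2 : e'.2 = v := (Finset.mem_filter.mp he').2
  ext
  · exact h
  · rw [h1, h2]

lemma isWalk_mono {F F' : Finset (V × V)} (h : F ⊆ F') {k : ℕ} {f : Fin (k + 1) → V}
    (hf : IsWalk F k f) : IsWalk F' k f := fun i => h (hf i)

lemma pathUnique_mono {F F' : Finset (V × V)} (h : F ⊆ F') (hu : PathUnique F') :
    PathUnique F := fun k hk f g hf hg h0 hl =>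
  hu k hk f g (isWalk_mono h hf) (isWalk_mono h hg) h0 hl

/-- endpoint map is injective on walks with a fixed start. -/
lemma endpoint_injOn {F : Finset (V × V)} (hu : PathUnique F) (k : ℕ) (v : V) :
    Set.InjOn (fun f : Fin (k + 1) → V => f (Fin.last k)) ↑(W F k v) := by
  intro f hf g hg h
  rw [Finset.mem_coe, mem_W] at hf hg
  rcases Nat.eq_zero_or_pos k with rfl | hk
  · funext j
    have hj : j = 0 := Fin.ext (by have := j.isLt; omega)
    rw [hj, hf.2, hg.2]
  · exact hu k hk f g hf.1 hg.1 (hf.2.trans hg.2.symm) h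

/-- endpoints of walks of length `k` from `v`. -/
noncomputable def EndS (F : Finset (V × V)) (k : ℕ) (v : V) : Finset V :=
  (W F k v).image (fun f => f (Fin.last k))

lemma card_EndS {F : Finset (V × V)} (hu : PathUnique F) (k : ℕ) (v : V) :
    (EndS F k v).card = (W F k v).card :=
  Finset.card_image_of_injOn (endpoint_injOn hu k v)

lemma W_zero (F : Finset (V × V)) (v : V) :
    W F 0 v = {fun _ => v} := by
  ext f
  simp only [mem_W, Finset.mem_singleton]
  constructor
  · rintro ⟨-, h0⟩
    funext j
    have hj : j = 0 := Fin.ext (by have := j.isLt; omega)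
    rw [hj, h0]
  · rintro rfl
    exact ⟨fun i => i.elim0, rfl⟩

lemma EndS_zero (F : Finset (V × V)) (v : V) : EndS F 0 v = {v} := by
  rw [EndS, W_zero]
  simp

/-- the key recursion: walks of length k+1 from v are counted by endpoints of
length-k walks weighted with out-degrees. -/
lemma card_W_succ {F : Finset (V × V)} (hu : PathUnique F) (k : ℕ) (v : V) :
    (W F (k + 1) v).card = ∑ u ∈ EndS F k v, (OutS F u).card := by
  classical
  -- extensions of a walk g by one edge
  set ext : (Fin (k + 1) → V) → Finset (Fin (k + 2) → V) :=
    fun g => (F.filter (fun e => e.1 = g (Fin.last k))).image (fun e => Fin.snoc g e.2) with hext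
  have hWeq : W F (k + 1) v = (W F k v).biUnion ext := by
    ext f
    constructor
    · intro hf
      rcases mem_W.mp hf with ⟨hwalk, h0⟩
      set g : Fin (k + 1) → V := fun j => f j.castSucc with hg
      have hgW : g ∈ W F k v := by
        refine mem_W.mpr ⟨?_, ?_⟩
        · intro i
          have h := hwalk i.castSucc
          have h1 : (i.castSucc).castSucc = (i.castSucc).castSucc := rfl
          have h2 : i.succ.castSucc = i.castSucc.succ := (Fin.succ_castSucc i).symm
          simpa [hg, h2] using h
        · simpa [hg] using h0
      refine Finset.mem_biUnion.mpr ⟨g, hgW, ?_⟩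
      refine Finset.mem_image.mpr ⟨(g (Fin.last k), f (Fin.last (k + 1))), ?_, ?_⟩
      · refine Finset.mem_filter.mpr ⟨?_, rfl⟩
        have h := hwalk (Fin.last k)
        rwa [Fin.succ_last] at h
      · funext j
        refine Fin.lastCases ?_ ?_ j
        · simp
        · intro i
          simp [hg]
    · intro hf
      rcases Finset.mem_biUnion.mp hf with ⟨g, hgW, hfe⟩
      rcases Finset.mem_image.mp hfe with ⟨e, he, rfl⟩
      rcases Finset.mem_filter.mp he with ⟨heF, he1⟩
      rcases mem_W.mp hgW with ⟨hgwalk, hg0⟩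
      refine mem_W.mpr ⟨?_, ?_⟩
      · intro i
        refine Fin.lastCases ?_ ?_ i
        · rw [Fin.succ_last]
          have h1 : (Fin.snoc g e.2 : Fin (k+2) → V) (Fin.last k).castSucc = g (Fin.last k) :=
            Fin.snoc_castSucc ..
          have h2 : (Fin.snoc g e.2 : Fin (k+2) → V) (Fin.last (k + 1)) = e.2 :=
            Fin.snoc_last ..
          rw [h1, h2, ← he1]
          exact heF
        · intro i
          have h2 : i.castSucc.succ = i.succ.castSucc := Fin.succ_castSucc i
          rw [h2]
          have e1 : (Fin.snoc g e.2 : Fin (k+2) → V) i.castSucc.castSucc = g i.castSucc :=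
            Fin.snoc_castSucc ..
          have e2 : (Fin.snoc g e.2 : Fin (k+2) → V) i.succ.castSucc = g i.succ :=
            Fin.snoc_castSucc ..
          rw [e1, e2]
          exact hgwalk i
      · have h0 : (0 : Fin (k + 2)) = (0 : Fin (k + 1)).castSucc := by simp
        rw [h0, Fin.snoc_castSucc, hg0]
  rw [hWeq]
  rw [Finset.card_biUnion]
  · -- card of each extension set, then reindex by endpoints
    have hcard : ∀ g ∈ W F k v, (ext g).card = (OutS F (g (Fin.last k))).card := by
      intro g hg
      rw [hext]
      rw [Finset.card_image_of_injOn, card_OutS]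
      intro e he e' he' h
      have h1 : e.1 = g (Fin.last k) := (Finset.mem_filter.mp he).2
      have h2 : e'.1 = g (Fin.last k) := (Finset.mem_filter.mp he').2
      have hsnd : e.2 = e'.2 := by
        have := congrFun h (Fin.last (k + 1))
        simpa using this
      ext
      · rw [h1, h2]
      · exact hsnd
    rw [Finset.sum_congr rfl hcard]
    rw [EndS]
    rw [Finset.sum_image (fun x hx y hy hxy => endpoint_injOn hu k v (Finset.mem_coe.mpr hx)
      (Finset.mem_coe.mpr hy) hxy)]
  · -- disjointness
    intro g hg g' hg' hne
    refine Finset.disjoint_left.mpr ?_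
    intro f hf hf'
    rcases Finset.mem_image.mp hf with ⟨e, he, rfl⟩
    rcases Finset.mem_image.mp hf' with ⟨e', he', heq⟩
    apply hne
    funext j
    have := congrFun heq j.castSucc
    simpa using this.symm

lemma four_mul_le_sq (x y : ℕ) : 4 * (x * y) ≤ (x + y) ^ 2 := by
  zify
  nlinarith [sq_nonneg ((x : ℤ) - (y : ℤ))]

/-- Core counting argument: if every vertex of `A` has an out-edge in `F`, and all
edges of `F` have endpoints in `A`, then `F` has at most `(|A|+1)²/4` edges. -/
lemma nosink (F : Finset (V × V)) (A : Finset V) (hu : PathUnique F)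
    (hA : ∀ e ∈ F, e.1 ∈ A ∧ e.2 ∈ A) (hout : ∀ v ∈ A, ∃ b : V, (v, b) ∈ F) :
    F.card ≤ (A.card + 1) ^ 2 / 4 := by
  classical
  set a := A.card with ha
  set q : V → ℕ := fun v => (OutS F v).card with hqdef
  set T : ℕ → V → ℕ := fun k v => (W F k v).card with hTdef
  have hq1 : ∀ v ∈ A, 1 ≤ q v := by
    intro v hv
    obtain ⟨b, hb⟩ := hout v hv
    exact Finset.card_pos.mpr ⟨b, mem_OutS.mpr hb⟩
  -- endpoints of walks of positive length lie in A
  have hend_mem : ∀ (k : ℕ) (v : V) (f : Fin (k + 1 + 1) → V), f ∈ W F (k + 1) v →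
      f (Fin.last (k + 1)) ∈ A := by
    intro k v f hf
    have hwalk := (mem_W.mp hf).1
    have h := hwalk (Fin.last k)
    rw [Fin.succ_last] at h
    exact (hA _ h).2
  have hEndS_sub : ∀ (k : ℕ) (v : V), 1 ≤ k → EndS F k v ⊆ A := by
    intro k v hk
    rcases k with _ | k'
    · omega
    · intro u hu'
      rcases Finset.mem_image.mp hu' with ⟨f, hf, rfl⟩
      exact hend_mem k' v f hf
  have hEndS_sub' : ∀ (k : ℕ) (v : V), v ∈ A → EndS F k v ⊆ A := by
    intro k v hv
    rcases Nat.eq_zero_or_pos k with rfl | hk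
    · rw [EndS_zero]
      simpa using hv
    · exact hEndS_sub k v hk
  -- recursion and monotonicity
  have hrec : ∀ (k : ℕ) (v : V), T (k + 1) v = ∑ u ∈ EndS F k v, q u := by
    intro k v
    exact card_W_succ hu k v
  have hT1 : ∀ v : V, T 1 v = q v := by
    intro v
    rw [hrec 0 v, EndS_zero, Finset.sum_singleton]
  have hTcard : ∀ (k : ℕ) (v : V), T k v = (EndS F k v).card := by
    intro k v
    exact (card_EndS hu k v).symm
  have hmono : ∀ (k : ℕ) (v : V), v ∈ A → T k v ≤ T (k + 1) v := by
    intro k v hv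
    rw [hrec k v, hTcard k v]
    calc (EndS F k v).card = ∑ _u ∈ EndS F k v, 1 := by simp
    _ ≤ ∑ u ∈ EndS F k v, q u :=
      Finset.sum_le_sum (fun u hu' => hq1 u (hEndS_sub' k v hv hu'))
  have hchain : ∀ (v : V), v ∈ A → ∀ k l : ℕ, k ≤ l → T k v ≤ T l v := by
    intro v hv k l hkl
    induction l, hkl using Nat.le_induction with
    | base => exact le_refl _
    | succ n hn ih => exact le_trans ih (hmono n v hv)
  have hTle : ∀ (k : ℕ) (v : V), 1 ≤ k → T k v ≤ a := by
    intro k v hk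
    rw [hTcard k v]
    exact Finset.card_le_card (hEndS_sub k v hk)
  -- plateau of the total count
  set Φ : ℕ → ℕ := fun k => ∑ v ∈ A, T k v with hPhi
  have hΦmono : ∀ k : ℕ, Φ k ≤ Φ (k + 1) := by
    intro k
    exact Finset.sum_le_sum (fun v hv => hmono k v hv)
  have hΦle : ∀ k : ℕ, 1 ≤ k → Φ k ≤ a * a := by
    intro k hk
    calc Φ k ≤ ∑ _v ∈ A, a := Finset.sum_le_sum (fun v _ => hTle k v hk)
    _ = a * a := by simp [mul_comm]; left; rfl
  have hplateau : ∃ k₀ : ℕ, 1 ≤ k₀ ∧ Φ (k₀ + 1) = Φ k₀ := by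
    by_contra hcon
    push_neg at hcon
    have hstrict : ∀ k : ℕ, 1 ≤ k → Φ k + 1 ≤ Φ (k + 1) := by
      intro k hk
      have h1 := hΦmono k
      have h2 := hcon k hk
      omega
    have hgrow : ∀ j : ℕ, Φ 1 + j ≤ Φ (1 + j) := by
      intro j
      induction j with
      | zero => simp
      | succ n ih =>
        have := hstrict (1 + n) (by omega)
        calc Φ 1 + (n + 1) = (Φ 1 + n) + 1 := by ring
        _ ≤ Φ (1 + n) + 1 := by omega
        _ ≤ Φ (1 + n + 1) := hstrict (1 + n) (by omega)
        _ = Φ (1 + (n + 1)) := by ring_nf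
    have h1 := hgrow (a * a + 1)
    have h2 := hΦle (1 + (a * a + 1)) (by omega)
    omega
  obtain ⟨k₀, hk₀1, hk₀eq⟩ := hplateau
  -- pointwise plateau
  have hpt : ∀ v ∈ A, T k₀ v = T (k₀ + 1) v := by
    have := (Finset.sum_eq_sum_iff_of_le (fun v hv => hmono k₀ v hv)).mp hk₀eq.symm
    intro v hv
    exact this v hv
  -- all endpoints at the plateau have out-degree 1
  have hq_end : ∀ v ∈ A, ∀ u ∈ EndS F k₀ v, q u = 1 := by
    intro v hv
    have hsum : ∑ u ∈ EndS F k₀ v, (1 : ℕ) = ∑ u ∈ EndS F k₀ v, q u := by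
      have h1 : ∑ u ∈ EndS F k₀ v, (1 : ℕ) = T k₀ v := by
        rw [hTcard k₀ v]; simp
      rw [h1, hpt v hv, hrec k₀ v]
    have := (Finset.sum_eq_sum_iff_of_le
      (fun u hu' => hq1 u (hEndS_sub k₀ v hk₀1 hu'))).mp hsum
    intro u hu'
    exact (this u hu').symm
  -- the set Z of out-degree-1 vertices
  set Z : Finset V := A.filter (fun u => q u = 1) with hZ
  set z : ℕ := Z.card with hz
  have hEndZ : ∀ v ∈ A, EndS F k₀ v ⊆ Z := by
    intro v hv u hu'
    exact Finset.mem_filter.mpr ⟨hEndS_sub k₀ v hk₀1 hu', hq_end v hv u hu'⟩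
  have hqz : ∀ v ∈ A, q v ≤ z := by
    intro v hv
    calc q v = T 1 v := (hT1 v).symm
    _ ≤ T k₀ v := hchain v hv 1 k₀ hk₀1
    _ = (EndS F k₀ v).card := hTcard k₀ v
    _ ≤ z := Finset.card_le_card (hEndZ v hv)
  -- total edge count
  have hm : F.card = ∑ v ∈ A, q v := by
    rw [Finset.card_eq_sum_card_fiberwise (fun e he => (hA e he).1)]
    exact Finset.sum_congr rfl (fun v _ => card_OutS)
  set c : ℕ := (A.filter (fun u => ¬ q u = 1)).card with hc
  have hzc : z + c = a := by
    rw [hz, hc, ha, Finset.card_filter_add_card_filter_not]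
  have hsplit : ∑ v ∈ A, q v = (∑ v ∈ Z, q v) + ∑ v ∈ A.filter (fun u => ¬ q u = 1), q v := by
    rw [hZ]
    exact (Finset.sum_filter_add_sum_filter_not A _ q).symm
  have hZsum : ∑ v ∈ Z, q v = z := by
    rw [hz]
    calc ∑ v ∈ Z, q v = ∑ _v ∈ Z, 1 :=
      Finset.sum_congr rfl (fun v hv => (Finset.mem_filter.mp hv).2)
    _ = Z.card := by simp
  have hNsum : ∑ v ∈ A.filter (fun u => ¬ q u = 1), q v ≤ c * z := by
    calc ∑ v ∈ A.filter (fun u => ¬ q u = 1), q v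
        ≤ ∑ _v ∈ A.filter (fun u => ¬ q u = 1), z :=
      Finset.sum_le_sum (fun v hv => hqz v (Finset.mem_filter.mp hv).1)
    _ = c * z := by simp [hc, mul_comm]
  have hmle : F.card ≤ z * (c + 1) := by
    rw [hm, hsplit]
    have : z + c * z = z * (c + 1) := by ring
    omega
  rw [Nat.le_div_iff_mul_le (by norm_num : 0 < 4)]
  calc F.card * 4 = 4 * F.card := by ring
  _ ≤ 4 * (z * (c + 1)) := by omega
  _ ≤ (z + (c + 1)) ^ 2 := four_mul_le_sq z (c + 1)
  _ = (a + 1) ^ 2 := by rw [← hzc]; ring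


lemma div_step (a : ℕ) : (a + 1) / 2 + a ^ 2 / 4 = (a + 1) ^ 2 / 4 := by
  rcases Nat.even_or_odd a with ⟨b, rfl⟩ | ⟨b, rfl⟩
  · have h1 : (b + b) ^ 2 = 4 * (b * b) := by ring
    have h2 : (b + b + 1) ^ 2 = 4 * (b * b) + 4 * b + 1 := by ring
    obtain ⟨c, hc⟩ : ∃ c, b * b = c := ⟨_, rfl⟩
    rw [h1, h2, hc]
    omega
  · have h1 : (2 * b + 1) ^ 2 = 4 * (b * b) + 4 * b + 1 := by ring
    have h2 : (2 * b + 1 + 1) ^ 2 = 4 * (b * b) + 8 * b + 4 := by ring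
    obtain ⟨c, hc⟩ : ∃ c, b * b = c := ⟨_, rfl⟩
    rw [h1, h2, hc]
    omega

lemma div_sq_mono (a : ℕ) : a ^ 2 / 4 ≤ (a + 1) ^ 2 / 4 :=
  Nat.div_le_div_right (Nat.pow_le_pow_left (Nat.le_succ a) 2)

/-- a two-step walk. -/
lemma isWalk_pair {F : Finset (V × V)} {u x w : V} (h1 : (u, x) ∈ F) (h2 : (x, w) ∈ F) :
    IsWalk F 2 (fun j : Fin 3 => if j.val = 0 then u else if j.val = 1 then x else w) := by
  intro i
  have hcs : (i.castSucc).val = i.val := rfl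
  have hs : (i.succ).val = i.val + 1 := rfl
  rcases i with ⟨iv, hiv⟩
  interval_cases iv
  · simpa [hcs, hs] using h1
  · simpa [hcs, hs] using h2

/-- uniqueness of 2-walks: Out(u) and In(w) intersect in at most one vertex. -/
lemma card_inter_le_one {F : Finset (V × V)} (hu : PathUnique F) (u w : V) :
    ((OutS F u) ∩ (InS F w)).card ≤ 1 := by
  rw [Finset.card_le_one]
  intro x hx y hy
  have hx1 : (u, x) ∈ F := mem_OutS.mp (Finset.mem_inter.mp hx).1
  have hx2 : (x, w) ∈ F := mem_InS.mp (Finset.mem_inter.mp hx).2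
  have hy1 : (u, y) ∈ F := mem_OutS.mp (Finset.mem_inter.mp hy).1
  have hy2 : (y, w) ∈ F := mem_InS.mp (Finset.mem_inter.mp hy).2
  set f : Fin 3 → V := fun j => if j.val = 0 then u else if j.val = 1 then x else w with hf
  set g : Fin 3 → V := fun j => if j.val = 0 then u else if j.val = 1 then y else w with hg
  have hwf : IsWalk F 2 f := isWalk_pair hx1 hx2
  have hwg : IsWalk F 2 g := isWalk_pair hy1 hy2
  have h0 : f 0 = g 0 := by simp [hf, hg]
  have hl : f (Fin.last 2) = g (Fin.last 2) := by simp [hf, hg, Fin.last]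
  have heq := hu 2 (by norm_num) f g hwf hwg h0 hl
  have h1 := congrFun heq (⟨1, by norm_num⟩ : Fin 3)
  simpa [hf, hg] using h1

lemma mem_swap {F : Finset (V × V)} {p : V × V} :
    p ∈ F.image Prod.swap ↔ p.swap ∈ F := by
  constructor
  · intro h
    rcases Finset.mem_image.mp h with ⟨e, he, rfl⟩
    simpa [Prod.swap_swap] using he
  · intro h
    exact Finset.mem_image.mpr ⟨p.swap, h, Prod.swap_swap p⟩

lemma pathUnique_swap {F : Finset (V × V)} (hu : PathUnique F) :
    PathUnique (F.image Prod.swap) := by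
  intro k hk f g hf hg h0 hl
  have hrev : ∀ h : Fin (k + 1) → V, IsWalk (F.image Prod.swap) k h →
      IsWalk F k (fun j => h j.rev) := by
    intro h hw i
    have hstep := hw i.rev
    have e1 : (i.rev).castSucc = (i.succ).rev := by
      apply Fin.ext
      simp only [Fin.val_rev, Fin.val_succ, Fin.coe_castSucc]
      omega
    have e2 : (i.rev).succ = (i.castSucc).rev := by
      apply Fin.ext
      simp only [Fin.val_rev, Fin.val_succ, Fin.coe_castSucc]
      omega
    rw [e1, e2] at hstep
    have := mem_swap.mp hstep
    simpa using this
  have hz : (0 : Fin (k + 1)).rev = Fin.last k := by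
    apply Fin.ext
    simp only [Fin.val_rev, Fin.val_zero, Fin.val_last]
    omega
  have hlast : (Fin.last k).rev = (0 : Fin (k + 1)) := by
    apply Fin.ext
    simp only [Fin.val_rev, Fin.val_zero, Fin.val_last]
    omega
  have heq := hu k hk (fun j => f j.rev) (fun j => g j.rev) (hrev f hf) (hrev g hg)
    (by simpa [hz] using hl) (by simpa [hlast] using h0)
  funext j
  have := congrFun heq j.rev
  simpa [Fin.rev_rev] using this

/-- The main bound, proved by strong induction on the vertex set. -/
lemma core : ∀ (a : ℕ) (A : Finset V) (F : Finset (V × V)), PathUnique F →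
    A.card = a → (∀ e ∈ F, e.1 ∈ A ∧ e.2 ∈ A) → F.card ≤ (a + 1) ^ 2 / 4 := by
  intro a
  induction a using Nat.strong_induction_on with
  | _ a IH =>
  intro A F hu hAcard hA
  by_cases h1 : ∀ v ∈ A, ∃ b : V, (v, b) ∈ F
  · have := nosink F A hu hA h1
    rwa [hAcard] at this
  by_cases h2 : ∀ v ∈ A, ∃ x : V, (x, v) ∈ F
  · have hAs : ∀ e ∈ F.image Prod.swap, e.1 ∈ A ∧ e.2 ∈ A := by
      intro e he
      have h := hA _ (mem_swap.mp he)
      exact ⟨h.2, h.1⟩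
    have houts : ∀ v ∈ A, ∃ b : V, (v, b) ∈ F.image Prod.swap := by
      intro v hv
      obtain ⟨x, hx⟩ := h2 v hv
      exact ⟨x, mem_swap.mpr (by simpa using hx)⟩
    have hbound := nosink (F.image Prod.swap) A (pathUnique_swap hu) hAs houts
    rw [Finset.card_image_of_injective _ Prod.swap_injective, hAcard] at hbound
    exact hbound
  push_neg at h1 h2
  obtain ⟨w, hwA, hwout⟩ := h1
  obtain ⟨u, huA, huin⟩ := h2
  have ha1 : 1 ≤ a := by
    rw [← hAcard]
    exact Finset.card_pos.mpr ⟨w, hwA⟩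
  by_cases huw : u = w
  · -- u is isolated
    subst huw
    have hA' : ∀ e ∈ F, e.1 ∈ A.erase u ∧ e.2 ∈ A.erase u := by
      intro e he
      refine ⟨Finset.mem_erase.mpr ⟨?_, (hA e he).1⟩, Finset.mem_erase.mpr ⟨?_, (hA e he).2⟩⟩
      · intro hne
        exact hwout e.2 (by rw [← hne]; exact he)
      · intro hne
        exact huin e.1 (by rw [← hne]; exact he)
    have hcard' : (A.erase u).card = a - 1 := by
      rw [Finset.card_erase_of_mem huA, hAcard]
    have hIH := IH (a - 1) (by omega) (A.erase u) F hu hcard' hA'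
    have hfix : a - 1 + 1 = a := by omega
    rw [hfix] at hIH
    exact hIH.trans (div_sq_mono a)
  · -- u is a source, w is a sink, u ≠ w
    have hOsub : OutS F u ⊆ A := fun b hb => (hA _ (mem_OutS.mp hb)).2
    have hIsub : InS F w ⊆ A := fun b hb => (hA _ (mem_InS.mp hb)).1
    have hqp : (OutS F u).card + (InS F w).card ≤ a + 1 := by
      have hx1 := Finset.card_union_add_card_inter (OutS F u) (InS F w)
      have hx2 : (OutS F u ∪ InS F w).card ≤ a := by
        rw [← hAcard]
        exact Finset.card_le_card (Finset.union_subset hOsub hIsub)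
      have hx3 := card_inter_le_one hu u w
      omega
    have hchoice : (OutS F u).card ≤ (a + 1) / 2 ∨ (InS F w).card ≤ (a + 1) / 2 := by
      omega
    rcases hchoice with hq | hp
    · -- remove the source u
      set F' := F.filter (fun e => ¬ e.1 = u) with hF'
      have hsub : F' ⊆ F := Finset.filter_subset _ _
      have hu' : PathUnique F' := pathUnique_mono hsub hu
      have hA' : ∀ e ∈ F', e.1 ∈ A.erase u ∧ e.2 ∈ A.erase u := by
        intro e he
        have heF : e ∈ F := hsub he
        have hne1 : ¬ e.1 = u := (Finset.mem_filter.mp he).2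
        have hne2 : ¬ e.2 = u := by
          intro hh
          exact huin e.1 (by rw [← hh]; exact heF)
        exact ⟨Finset.mem_erase.mpr ⟨hne1, (hA e heF).1⟩,
          Finset.mem_erase.mpr ⟨hne2, (hA e heF).2⟩⟩
      have hcard' : (A.erase u).card = a - 1 := by
        rw [Finset.card_erase_of_mem huA, hAcard]
      have hIH := IH (a - 1) (by omega) (A.erase u) F' hu' hcard' hA'
      have hfix : a - 1 + 1 = a := by omega
      rw [hfix] at hIH
      have hsplitc : (F.filter (fun e => e.1 = u)).card + F'.card = F.card := by
        rw [hF']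
        exact Finset.card_filter_add_card_filter_not _
      have hqc : (F.filter (fun e => e.1 = u)).card = (OutS F u).card := card_OutS
      calc F.card = (F.filter (fun e => e.1 = u)).card + F'.card := hsplitc.symm
      _ ≤ (a + 1) / 2 + a ^ 2 / 4 := add_le_add (hqc ▸ hq) hIH
      _ = (a + 1) ^ 2 / 4 := div_step a
    · -- remove the sink w
      set F' := F.filter (fun e => ¬ e.2 = w) with hF'
      have hsub : F' ⊆ F := Finset.filter_subset _ _
      have hu' : PathUnique F' := pathUnique_mono hsub hu
      have hA' : ∀ e ∈ F', e.1 ∈ A.erase w ∧ e.2 ∈ A.erase w := by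
        intro e he
        have heF : e ∈ F := hsub he
        have hne2 : ¬ e.2 = w := (Finset.mem_filter.mp he).2
        have hne1 : ¬ e.1 = w := by
          intro hh
          exact hwout e.2 (by rw [← hh]; exact heF)
        exact ⟨Finset.mem_erase.mpr ⟨hne1, (hA e heF).1⟩,
          Finset.mem_erase.mpr ⟨hne2, (hA e heF).2⟩⟩
      have hcard' : (A.erase w).card = a - 1 := by
        rw [Finset.card_erase_of_mem hwA, hAcard]
      have hIH := IH (a - 1) (by omega) (A.erase w) F' hu' hcard' hA'
      have hfix : a - 1 + 1 = a := by omega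
      rw [hfix] at hIH
      have hsplitc : (F.filter (fun e => e.2 = w)).card + F'.card = F.card := by
        rw [hF']
        exact Finset.card_filter_add_card_filter_not _
      have hpc : (F.filter (fun e => e.2 = w)).card = (InS F w).card := card_InS
      calc F.card = (F.filter (fun e => e.2 = w)).card + F'.card := hsplitc.symm
      _ ≤ (a + 1) / 2 + a ^ 2 / 4 := add_le_add (hpc ▸ hp) hIH
      _ = (a + 1) ^ 2 / 4 := div_step a


end PathUniqueAux

/-- A path unique graph on n vertices has at most (n+1)²/4 edges if n is odd and
at most n(n+2)/4 edges if n is even. -/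
theorem pathUnique_card_le {V : Type*} [Fintype V] (E : Finset (V × V))
    (h : PathUnique E) :
    E.card ≤ if Odd (Fintype.card V) then (Fintype.card V + 1) ^ 2 / 4
             else Fintype.card V * (Fintype.card V + 2) / 4 := by
  classical
  have hb : E.card ≤ (Fintype.card V + 1) ^ 2 / 4 :=
    PathUniqueAux.core (Fintype.card V) Finset.univ E h Finset.card_univ
      (fun e _ => ⟨Finset.mem_univ _, Finset.mem_univ _⟩)
  rcases Nat.even_or_odd (Fintype.card V) with he | ho
  · rw [if_neg ((Nat.not_odd_iff_even).mpr he)]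
    obtain ⟨b, hb2⟩ := he
    have h1 : Fintype.card V * (Fintype.card V + 2) = 4 * (b * b) + 4 * b := by
      rw [hb2]; ring
    have h2 : (Fintype.card V + 1) ^ 2 = 4 * (b * b) + 4 * b + 1 := by
      rw [hb2]; ring
    obtain ⟨c, hc⟩ : ∃ c, b * b = c := ⟨_, rfl⟩
    rw [h2, hc] at hb
    rw [h1, hc]
    omega
  · rw [if_pos ho]
    exact hb
end

section
/- For every n ≥ 1 there exists a path unique directed graph (loops allowed) on n vertices with exactly (n+1)²/4 edges if n is odd, and exactly n(n+2)/4 edges if n is even. -/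
/-- For every n ≥ 1 there is a path unique directed graph on n vertices with
exactly (n+1)²/4 edges if n is odd, and exactly n(n+2)/4 edges if n is even. -/
theorem exists_extremal_pathUnique (n : ℕ) (hn : 1 ≤ n) :
    ∃ E : Finset (Fin n × Fin n), PathUnique E ∧
      E.card = if Odd n then (n + 1) ^ 2 / 4 else n * (n + 2) / 4 := by
  have hm : (n - 1) / 2 < n := by omega
  set m : Fin n := ⟨(n - 1) / 2, hm⟩ with hmdef
  refine ⟨Finset.Iic m ×ˢ Finset.Ici m, ?_, ?_⟩
  · intro k hk f g hf hg h0 hl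
    funext i
    rcases Nat.lt_or_ge 0 i.val with hpos | hz
    swap
    · have : i = 0 := by
        apply Fin.ext; simp only [Fin.val_zero]; omega
      rw [this]; exact h0
    rcases Nat.lt_or_ge i.val k with hlt | hge
    · -- intermediate vertex: must equal m
      have key : ∀ h : Fin (k+1) → Fin n, IsWalk (Finset.Iic m ×ˢ Finset.Ici m) k h →
          h i = m := by
        intro h hw
        have h1 : (h i) ≤ m := by
          have j : Fin k := ⟨i.val, hlt⟩
          have := hw ⟨i.val, hlt⟩
          rw [Finset.mem_product] at this
          have hc : (⟨i.val, hlt⟩ : Fin k).castSucc = i := by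
            apply Fin.ext; simp [Fin.castSucc]
          rw [hc] at this
          exact Finset.mem_Iic.mp this.1
        have h2 : m ≤ h i := by
          have := hw ⟨i.val - 1, by omega⟩
          rw [Finset.mem_product] at this
          have hc : (⟨i.val - 1, by omega⟩ : Fin k).succ = i := by
            apply Fin.ext; simp; omega
          rw [hc] at this
          exact Finset.mem_Ici.mp this.2
        exact le_antisymm h1 h2
      rw [key f hf, key g hg]
    · have : i = Fin.last k := by
        apply Fin.ext; simp [Fin.last]; omega
      rw [this]; exact hl
  · rw [Finset.card_product, Fin.card_Iic, Fin.card_Ici]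
    show ((n-1)/2 + 1) * (n - (n-1)/2) = _
    rcases Nat.even_or_odd n with ⟨t, rfl⟩ | ⟨t, rfl⟩
    · rw [if_neg (by simp [Nat.odd_iff]; omega)]
      have ht : 1 ≤ t := by omega
      have h1 : (t + t - 1) / 2 = t - 1 := by omega
      have h2 : t - 1 + 1 = t := by omega
      have h3 : t + t - (t - 1) = t + 1 := by omega
      have h4 : (t + t) * (t + t + 2) = t * (t + 1) * 4 := by ring
      rw [h1, h2, h3, h4, Nat.mul_div_cancel _ (by norm_num)]
    · rw [if_pos ⟨t, rfl⟩]
      have h1 : (2 * t + 1 - 1) / 2 = t := by omega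
      have h3 : 2 * t + 1 - t = t + 1 := by omega
      have h4 : (2 * t + 1 + 1) ^ 2 = (t + 1) * (t + 1) * 4 := by ring
      rw [h1, h3, h4, Nat.mul_div_cancel _ (by norm_num)]
end

section
/- Let A be the (ℓ+1)×(ℓ+1) matrix (indices 0..ℓ) with A(0,0)=1, A(i,i+1)=1 for 0 ≤ i ≤ ℓ-1, A(ℓ,0)=1, A(ℓ,ℓ-p+1)=1, and all other entries 0, where 1 ≤ p < ℓ. Then its characteristic polynomial equals x^(ℓ+1) - x^ℓ - x^(ℓ-p+1) + x^(ℓ-p) - 1 (up to sign). -/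
open Polynomial Matrix

noncomputable def Smat (n k : ℕ) : Matrix (Fin n) (Fin n) ℚ[X] :=
  Matrix.of fun i j =>
    if i.val + 1 = n then (if j.val = k then -1 else 0)
    else if j.val = i.val then X else if j.val = i.val + 1 then -1 else 0

lemma Smat_apply (n k : ℕ) (i j : Fin n) :
    Smat n k i j =
      if i.val + 1 = n then (if j.val = k then -1 else 0)
      else if j.val = i.val then X else if j.val = i.val + 1 then -1 else 0 := rfl

lemma det_Smat_last (n : ℕ) : (Smat (n+1) n).det = -X ^ n := by
  rw [Matrix.det_of_upperTriangular]
  · rw [Fin.prod_univ_castSucc]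
    have h1 : ∀ i : Fin n, Smat (n+1) n i.castSucc i.castSucc = X := by
      intro i
      rw [Smat_apply]
      rw [if_neg (by simp; omega), if_pos rfl]
    have h2 : Smat (n+1) n (Fin.last n) (Fin.last n) = -1 := by
      rw [Smat_apply]; simp
    rw [Finset.prod_congr rfl (fun i _ => h1 i), h2, Finset.prod_const]
    simp [mul_comm]
  · intro i j hij
    have hij' : (j : ℕ) < i := hij
    rw [Smat_apply]
    split_ifs <;> first | rfl | omega

lemma det_Smat : ∀ n k : ℕ, k < n → (Smat n k).det = -X ^ k := by
  intro n
  induction n with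
  | zero => intro k hk; omega
  | succ n ih =>
    intro k hk
    rcases Nat.lt_succ_iff_lt_or_eq.mp hk with hkn | hkn
    swap
    · rw [hkn]; exact det_Smat_last n
    have hn : 1 ≤ n := by omega
    rw [Matrix.det_succ_column (Smat (n+1) k) (Fin.last n)]
    rw [Finset.sum_eq_single_of_mem (⟨n - 1, by omega⟩ : Fin (n+1)) (Finset.mem_univ _)]
    · have hentry : Smat (n+1) k ⟨n-1, by omega⟩ (Fin.last n) = -1 := by
        rw [Smat_apply]
        rw [if_neg (by simp; omega), if_neg (by simp; omega), if_pos (by simp; omega)]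
      have hminor : (Smat (n+1) k).submatrix (⟨n-1, by omega⟩ : Fin (n+1)).succAbove
          (Fin.last n).succAbove = Smat n k := by
        ext i j
        simp only [Matrix.submatrix_apply, Fin.succAbove_last, Fin.succAbove, Smat_apply,
          Fin.coe_castSucc, Fin.val_succ, Fin.val_last, Fin.lt_def]
        split_ifs <;> first | rfl | omega | (simp_all [Fin.ext_iff] <;> omega)
      rw [hentry, hminor, ih k hkn]
      have : ((⟨n-1, by omega⟩ : Fin (n+1)) : ℕ) + ((Fin.last n : Fin (n+1)) : ℕ) = 2*n - 1 := by
        simp; omega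
      rw [this]
      have hodd : Odd (2*n - 1) := ⟨n - 1, by omega⟩
      rw [hodd.neg_one_pow]
      ring
    · intro i _ hi
      have hz : Smat (n+1) k i (Fin.last n) = 0 := by
        have hiv : (i : ℕ) ≠ n - 1 := fun h => hi (Fin.ext (by simpa using h))
        rw [Smat_apply]
        split_ifs <;> first | rfl | (simp_all <;> omega)
      rw [hz]; ring
set_option maxHeartbeats 1000000 in
/-- The characteristic polynomial of the (ℓ+1)×(ℓ+1) adjacency matrix of the
constraint graph of a periodic label of length ℓ with non-cyclic period p is
x^(ℓ+1) - x^ℓ - x^(ℓ-p+1) + x^(ℓ-p) - 1. -/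
theorem charpoly_periodic_label (ℓ p : ℕ) (hp : 1 ≤ p) (hpl : p < ℓ)
    (A : Matrix (Fin (ℓ + 1)) (Fin (ℓ + 1)) ℚ)
    (hA : ∀ i j : Fin (ℓ + 1), A i j =
      if (i = 0 ∧ j = 0) ∨ (j.val = i.val + 1) ∨ (i.val = ℓ ∧ j = 0) ∨
         (i.val = ℓ ∧ j.val = ℓ - p + 1) then 1 else 0) :
    Matrix.charpoly A = X ^ (ℓ + 1) - X ^ ℓ - X ^ (ℓ - p + 1) + X ^ (ℓ - p) - 1 := by
  have hl : 2 ≤ ℓ := by omega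
  set M := Matrix.charmatrix A with hMdef
  have hMe : ∀ i j : Fin (ℓ+1), M i j =
      (if i.val = j.val then X else 0) -
      (if (i = 0 ∧ j = 0) ∨ (j.val = i.val + 1) ∨ (i.val = ℓ ∧ j = 0) ∨
         (i.val = ℓ ∧ j.val = ℓ - p + 1) then 1 else 0) := by
    intro i j
    by_cases h : i = j
    · subst h
      rw [hMdef, Matrix.charmatrix_apply_eq, hA, if_pos rfl]
      split <;> simp
    · rw [hMdef, Matrix.charmatrix_apply_ne _ _ _ h, hA,
        if_neg (fun hv => h (Fin.ext hv))]
      split <;> simp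
  set N := M.submatrix Fin.succ Fin.succ with hNdef
  set L := M.submatrix (Fin.last ℓ).succAbove Fin.succ with hLdef
  -- determinant of L (lower triangular)
  have hLdet : L.det = (-1) ^ ℓ := by
    rw [Matrix.det_of_lowerTriangular]
    · have hLdiag : ∀ i : Fin ℓ, L i i = -1 := by
        intro i
        rw [hLdef, Matrix.submatrix_apply, Fin.succAbove_last, hMe,
          if_neg (by simp only [Fin.coe_castSucc, Fin.val_succ]; omega),
          if_pos (by simp only [Fin.ext_iff, Fin.coe_castSucc, Fin.val_succ, Fin.val_zero, true_or, or_true]; try omega)]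
        ring
      rw [Finset.prod_congr rfl (fun i _ => hLdiag i), Finset.prod_const]
      simp
    · intro i j hij
      have hij' : (i : ℕ) < j := hij
      have hi' : (i : ℕ) < ℓ := i.isLt
      rw [hLdef, Matrix.submatrix_apply, Fin.succAbove_last, hMe,
        if_neg (by simp only [Fin.coe_castSucc, Fin.val_succ]; omega),
        if_neg (by simp only [Fin.ext_iff, Fin.coe_castSucc, Fin.val_succ, Fin.val_zero]; omega)]
      ring
  -- determinant of N
  have hNdet : N.det = X ^ ℓ - X ^ (ℓ - p) := by
    have hNe : ∀ i j : Fin ℓ, N i j =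
        (if (i : ℕ) = (j : ℕ) then X else 0) -
        (if ((j : ℕ) + 1 = (i : ℕ) + 2) ∨ ((i : ℕ) + 1 = ℓ ∧ (j : ℕ) + 1 = ℓ - p + 1)
          then 1 else 0) := by
      intro i j
      rw [hNdef, Matrix.submatrix_apply, hMe]
      have h1 : ((i.succ : Fin (ℓ+1)) : ℕ) = (i : ℕ) + 1 := rfl
      have h2 : ((j.succ : Fin (ℓ+1)) : ℕ) = (j : ℕ) + 1 := rfl
      congr 1
      · rw [h1, h2]; simp only [Nat.add_right_cancel_iff]
      · congr 1
        simp only [eq_iff_iff, Fin.ext_iff, h1, h2, Fin.val_zero]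
        omega
    set lst : Fin ℓ := ⟨ℓ - 1, by omega⟩ with hlst
    have hlstv : (lst : ℕ) = ℓ - 1 := rfl
    set r1 : Fin ℓ → ℚ[X] := fun j => if j = lst then X else 0 with hr1
    set r2 : Fin ℓ → ℚ[X] := fun j => if (j : ℕ) = ℓ - p then -1 else 0 with hr2
    have hNrow : N lst = r1 + r2 := by
      funext j
      rw [hNe, Pi.add_apply, hr1, hr2]
      simp only [Fin.ext_iff, hlstv]
      by_cases hj : (j : ℕ) = ℓ - 1
      · rw [if_pos (by omega), if_pos hj]
        by_cases hp1 : p = 1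
        · rw [if_pos (by omega), if_pos (by omega)]; ring
        · rw [if_neg (by omega), if_neg (by omega)]; ring
      · rw [if_neg (by omega), if_neg hj]
        by_cases hc : (j : ℕ) = ℓ - p
        · rw [if_pos (by omega), if_pos hc]; ring
        · rw [if_neg (by omega), if_neg hc]; ring
    have hsplit : N = N.updateRow lst (r1 + r2) := by
      rw [← hNrow, Matrix.updateRow_eq_self]
    have hT : (N.updateRow lst r1).det = X ^ ℓ := by
      rw [Matrix.det_of_upperTriangular]
      · have hdiag : ∀ i : Fin ℓ, (N.updateRow lst r1) i i = X := by
          intro i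
          by_cases h : i = lst
          · subst h
            rw [Matrix.updateRow_self, hr1]; simp
          · have hiv : (i : ℕ) ≠ ℓ - 1 := fun hv => h (Fin.ext (by rw [hv, hlstv]))
            rw [Matrix.updateRow_ne h, hNe, if_pos rfl, if_neg (by omega)]
            ring
        rw [Finset.prod_congr rfl (fun i _ => hdiag i), Finset.prod_const]
        simp
      · intro i j hij
        have hij' : (j : ℕ) < i := hij
        have hi' : (i : ℕ) < ℓ := i.isLt
        by_cases h : i = lst
        · subst h
          rw [Matrix.updateRow_self, hr1]
          exact if_neg (fun hv : j = lst => by rw [hv] at hij'; omega)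
        · have hiv : (i : ℕ) ≠ ℓ - 1 := fun hv => h (Fin.ext (by rw [hv, hlstv]))
          rw [Matrix.updateRow_ne h, hNe, if_neg (by omega), if_neg (by omega)]
          ring
    have hS : N.updateRow lst r2 = Smat ℓ (ℓ - p) := by
      ext i j
      rw [Smat_apply]
      by_cases h : i = lst
      · subst h
        rw [Matrix.updateRow_self, if_pos (show ((lst : Fin ℓ) : ℕ) + 1 = ℓ by omega)]
      · have hiv : (i : ℕ) ≠ ℓ - 1 := fun hv => h (Fin.ext (by rw [hv, hlstv]))
        have hi' : (i : ℕ) < ℓ := i.isLt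
        rw [Matrix.updateRow_ne h, hNe, if_neg (show ¬((i : ℕ) + 1 = ℓ) by omega)]
        by_cases hji : (j : ℕ) = (i : ℕ)
        · rw [if_pos hji.symm, if_pos hji,
            if_neg (show ¬(((j:ℕ) + 1 = (i:ℕ) + 2) ∨ ((i:ℕ) + 1 = ℓ ∧ (j:ℕ) + 1 = ℓ - p + 1))
              by omega)]
          ring
        · rw [if_neg (show ¬((i:ℕ) = (j:ℕ)) from fun hh => hji hh.symm), if_neg hji]
          by_cases hji2 : (j : ℕ) = (i : ℕ) + 1
          · rw [if_pos hji2, if_pos (Or.inl (show (j:ℕ) + 1 = (i:ℕ) + 2 by omega))]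
            ring
          · rw [if_neg hji2,
              if_neg (show ¬(((j:ℕ) + 1 = (i:ℕ) + 2) ∨ ((i:ℕ) + 1 = ℓ ∧ (j:ℕ) + 1 = ℓ - p + 1))
                by omega)]
            ring
    rw [hsplit, Matrix.det_updateRow_add, hT, hS, det_Smat ℓ (ℓ - p) (by omega)]
    ring
  -- entries in column 0
  have hM00 : M 0 0 = X - 1 := by
    rw [hMe, if_pos rfl, if_pos (Or.inl ⟨rfl, rfl⟩)]
  have hMl0 : M (Fin.last ℓ) 0 = -1 := by
    rw [hMe, if_neg (by simp only [Fin.val_last, Fin.val_zero]; omega),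
      if_pos (Or.inr (Or.inr (Or.inl ⟨Fin.val_last ℓ, rfl⟩)))]
    ring
  have hMzero : ∀ i : Fin (ℓ+1), i ∉ ({0, Fin.last ℓ} : Finset (Fin (ℓ+1))) → M i 0 = 0 := by
    intro i hi
    simp only [Finset.mem_insert, Finset.mem_singleton] at hi
    push_neg at hi
    obtain ⟨hi0, hil⟩ := hi
    have hi0' : (i : ℕ) ≠ 0 := fun h => hi0 (Fin.ext h)
    have hil' : (i : ℕ) ≠ ℓ := fun h => hil (Fin.ext (by rw [h, Fin.val_last]))
    rw [hMe, if_neg (by simp only [Fin.val_zero]; omega),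
      if_neg (by simp only [Fin.ext_iff, Fin.val_zero]; omega)]
    ring
  -- Laplace expansion along column 0
  have hexp := Matrix.det_succ_column_zero M
  rw [(Finset.sum_subset (Finset.subset_univ ({0, Fin.last ℓ} : Finset (Fin (ℓ+1))))
      (fun x _ hx => by rw [hMzero x hx]; ring)).symm] at hexp
  rw [Finset.sum_pair (by simp only [ne_eq, Fin.ext_iff, Fin.val_zero, Fin.val_last]; omega)]
    at hexp
  rw [Fin.succAbove_zero] at hexp
  have hchar : Matrix.charpoly A = M.det := rfl
  rw [hchar, hexp, hM00, hMl0, ← hNdef, ← hLdef, hNdet, hLdet]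
  have hll : ((Fin.last ℓ : Fin (ℓ+1)) : ℕ) = ℓ := rfl
  have h00 : (((0 : Fin (ℓ+1)) : ℕ)) = 0 := rfl
  rw [hll, h00]
  have hsq : ((-1 : ℚ[X]) ^ ℓ * -1 * (-1) ^ ℓ) = -1 := by
    rw [mul_comm, ← mul_assoc, ← mul_pow]
    norm_num
  rw [pow_zero, hsq, pow_succ X ℓ, pow_succ X (ℓ - p)]
  ring
end
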